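/- arXiv:2205.03914 — 6 statements merged into one kernel-verified Lean document; each statement's English description precedes it below -/
import Mathlib

section
/- There exist vectors x_1, x_2 ∈ ℝ^d and an unbiased compression operator C in B^d(ω) (namely Rand-1 sparsification) such that the inequality E[‖(1/2)(C(x_1)+C(x_2))‖²] − E[‖C((x_1+x_2)/2)‖²] ≤ G fails for every fixed constant G, by taking x_2 = −x_1 = t·(1,…,1)ᵀ with t → ∞. Concretely: for the Rand-1 compressor on ℝ^d with d ≥ 2, and x_2 = −x_1 = t·(1,…,1)ᵀ, the quantity E[‖(1/2)(C(x_1)+C(x_2))‖²] grows without bound as t → ∞ while C((x_1+x_2)/2) = 0. -/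
open scoped BigOperators

lemma term_val (d : ℕ) (t : ℝ) (s₁ s₂ : Fin d) :
    ‖(1 / 2 : ℝ) • ((d : ℝ) • (-t : ℝ) • EuclideanSpace.single s₁ (1 : ℝ)
      + (d : ℝ) • (t : ℝ) • EuclideanSpace.single s₂ (1 : ℝ))‖ ^ 2
    = if s₁ = s₂ then 0 else (d : ℝ) ^ 2 * t ^ 2 / 2 := by
  by_cases h : s₁ = s₂
  · subst h
    simp [smul_smul, ← add_smul]
  · rw [if_neg h]
    have hv : (1 / 2 : ℝ) • ((d : ℝ) • (-t : ℝ) • EuclideanSpace.single s₁ (1 : ℝ)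
        + (d : ℝ) • (t : ℝ) • EuclideanSpace.single s₂ (1 : ℝ))
        = ((-(d : ℝ) * t / 2) • EuclideanSpace.single s₁ (1 : ℝ))
          + (((d : ℝ) * t / 2) • EuclideanSpace.single s₂ (1 : ℝ)) := by
      module
    have hinner : (inner ℝ ((-(d : ℝ) * t / 2) • EuclideanSpace.single s₁ (1 : ℝ))
        (((d : ℝ) * t / 2) • EuclideanSpace.single s₂ (1 : ℝ)) : ℝ) = 0 := by
      rw [real_inner_smul_left, real_inner_smul_right,
        EuclideanSpace.inner_single_left]
      simp [EuclideanSpace.single_apply, h]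
    rw [hv, @norm_add_sq_real, hinner, norm_smul, norm_smul]
    have h1 : ‖EuclideanSpace.single s₁ (1 : ℝ)‖ = 1 := by
      simp [EuclideanSpace.norm_single]
    have h2 : ‖EuclideanSpace.single s₂ (1 : ℝ)‖ = 1 := by
      simp [EuclideanSpace.norm_single]
    rw [h1, h2]
    simp [Real.norm_eq_abs, mul_pow, sq_abs]
    ring_nf
    rw [sq_abs]

/-- Counterexample: for the Rand-1 sparsification compressor
`C(x) = d · x_s · e_s` (with `s` uniform on `{1,…,d}`), taking `x₂ = −x₁ = t·(1,…,1)ᵀ`,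
the quantity `E[‖(1/2)(C(x₁)+C(x₂))‖²]` (the compressors applied to `x₁` and `x₂`
using independent coordinates) exceeds any constant `G` for `t` large enough,
while `C((x₁+x₂)/2) = 0`. -/
theorem stmt_3 (d : ℕ) (hd : 2 ≤ d)
    (C : EuclideanSpace ℝ (Fin d) → Fin d → EuclideanSpace ℝ (Fin d))
    (hC : ∀ x s, C x s = (d : ℝ) • (x s) • EuclideanSpace.single s (1 : ℝ)) :
    ∀ G : ℝ, ∃ t : ℝ, 0 < t ∧
      ∀ x₁ x₂ : EuclideanSpace ℝ (Fin d),
        x₁ = (-t) • (EuclideanSpace.equiv (Fin d) ℝ).symm (fun _ => (1 : ℝ)) →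
        x₂ = t • (EuclideanSpace.equiv (Fin d) ℝ).symm (fun _ => (1 : ℝ)) →
        (G < (1 / (d : ℝ) ^ 2) * ∑ s₁ : Fin d, ∑ s₂ : Fin d,
            ‖(1 / 2 : ℝ) • (C x₁ s₁ + C x₂ s₂)‖ ^ 2
          ∧ ∀ s, C ((1 / 2 : ℝ) • (x₁ + x₂)) s = 0) := by
  intro G
  refine ⟨|G| + 1, by positivity, ?_⟩
  set t : ℝ := |G| + 1 with htdef
  intro x₁ x₂ h1 h2
  have hx1 : ∀ s, x₁ s = -t := by intro s; rw [h1]; simp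
  have hx2 : ∀ s, x₂ s = t := by intro s; rw [h2]; simp
  set c : ℝ := (d : ℝ) ^ 2 * t ^ 2 / 2 with hcdef
  have hd2 : (2 : ℝ) ≤ (d : ℝ) := by exact_mod_cast hd
  constructor
  · have hrow : ∀ s₁ : Fin d, ∑ s₂ : Fin d, (if s₁ = s₂ then (0 : ℝ) else c)
        = ((d : ℝ) - 1) * c := by
      intro s₁
      rw [← Finset.add_sum_erase _ _ (Finset.mem_univ s₁), if_pos rfl, zero_add,
        Finset.sum_congr rfl
          (fun x hx => if_neg (Ne.symm (Finset.ne_of_mem_erase hx))),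
        Finset.sum_const, Finset.card_erase_of_mem (Finset.mem_univ s₁),
        Finset.card_univ, Fintype.card_fin, nsmul_eq_mul]
      have : ((d - 1 : ℕ) : ℝ) = (d : ℝ) - 1 := by
        rw [Nat.cast_sub (by omega)]; simp
      rw [this]
    have hsum : ∑ s₁ : Fin d, ∑ s₂ : Fin d,
        ‖(1 / 2 : ℝ) • (C x₁ s₁ + C x₂ s₂)‖ ^ 2
        = (d : ℝ) * (((d : ℝ) - 1) * c) := by
      have hterm : ∀ s₁ s₂ : Fin d, ‖(1 / 2 : ℝ) • (C x₁ s₁ + C x₂ s₂)‖ ^ 2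
          = if s₁ = s₂ then (0 : ℝ) else c := by
        intro s₁ s₂
        rw [hC, hC, hx1, hx2]
        exact term_val d t s₁ s₂
      simp_rw [hterm, hrow]
      rw [Finset.sum_const, Finset.card_univ, Fintype.card_fin, nsmul_eq_mul]
    rw [hsum]
    have hGt : G < t := by
      calc G ≤ |G| := le_abs_self G
      _ < t := by simp [htdef]
    have ht1 : (1 : ℝ) ≤ t := by simp [htdef]
    have ht2 : t ≤ t ^ 2 := by nlinarith
    have heq : (1 / (d : ℝ) ^ 2) * ((d : ℝ) * (((d : ℝ) - 1) * c))
        = (d : ℝ) * ((d : ℝ) - 1) * t ^ 2 / 2 := by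
      rw [hcdef]
      field_simp
    rw [heq]
    nlinarith [sq_nonneg t, sq_nonneg ((d : ℝ) - 2)]
  · intro s
    have : x₁ + x₂ = 0 := by
      rw [h1, h2]
      ext i
      simp
    rw [this]
    simp [hC]
end

section
/- Let random vectors h_{t,m}, x^n_{t,m} ∈ ℝ^d be given, let C be an unbiased compressor with E[‖C(y)‖²] ≤ (ω+1)‖y‖², let 0 < α ≤ 1/(ω+1), let q_{t,m} = C(x^n_{t,m} − h_{t,m}) and h_{t+1,m} = h_{t,m} + α q_{t,m}. Then for any fixed vector x^n_{*,m}, E[‖h_{t+1,m} − x^n_{*,m}‖² | x^n_{t,m}, h_{t,m}] ≤ (1−α)‖h_{t,m} − x^n_{*,m}‖² + α‖x^n_{t,m} − x^n_{*,m}‖². -/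
open MeasureTheory

/-- Shift-learning lemma (Lemma 3): with `q = C(x − h)` and `h⁺ = h + α q` for an unbiased
compressor `C ∈ B^d(ω)` and `0 < α ≤ 1/(ω+1)`,
`E[‖h⁺ − x_*‖²] ≤ (1−α)‖h − x_*‖² + α‖x − x_*‖²`. -/
theorem stmt_7 {d : ℕ} {Ω : Type*} [MeasurableSpace Ω] (P : Measure Ω)
    [IsProbabilityMeasure P] (ω : ℝ) (hω : 0 ≤ ω)
    (C : EuclideanSpace ℝ (Fin d) → Ω → EuclideanSpace ℝ (Fin d))
    (hint : ∀ y, Integrable (fun s => C y s) P)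
    (hint2 : ∀ y, Integrable (fun s => ‖C y s‖ ^ 2) P)
    (hunbiased : ∀ y, ∫ s, C y s ∂P = y)
    (hmoment : ∀ y, ∫ s, ‖C y s‖ ^ 2 ∂P ≤ (ω + 1) * ‖y‖ ^ 2)
    (α : ℝ) (hα0 : 0 < α) (hα : α ≤ 1 / (ω + 1))
    (x h xstar : EuclideanSpace ℝ (Fin d)) :
    ∫ s, ‖(h + α • C (x - h) s) - xstar‖ ^ 2 ∂P
      ≤ (1 - α) * ‖h - xstar‖ ^ 2 + α * ‖x - xstar‖ ^ 2 := by
  set a := h - xstar with ha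
  set b := x - h with hb
  set c := fun s => C (x - h) s with hc
  have hexp : ∀ s, ‖(h + α • C (x - h) s) - xstar‖ ^ 2
      = ‖a‖ ^ 2 + (2 * α) * inner ℝ a (c s) + α ^ 2 * ‖c s‖ ^ 2 := by
    intro s
    have h1 : (h + α • C (x - h) s) - xstar = a + α • c s := by
      simp [ha, hc]; abel
    rw [h1, norm_add_sq_real, real_inner_smul_right, norm_smul]
    simp [mul_pow]
    ring
  have hic : Integrable c P := hint _
  have hi1 : Integrable (fun s => (2 * α) * inner ℝ a (c s) : Ω → ℝ) P := by
    apply Integrable.const_mul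
    exact (innerSL ℝ a).integrable_comp hic
  have hi2 : Integrable (fun s => α ^ 2 * ‖c s‖ ^ 2) P := (hint2 _).const_mul _
  calc ∫ s, ‖(h + α • C (x - h) s) - xstar‖ ^ 2 ∂P
      = ∫ s, (‖a‖ ^ 2 + ((2 * α) * inner ℝ a (c s) + α ^ 2 * ‖c s‖ ^ 2)) ∂P := by
        congr 1; funext s; rw [hexp s]; ring
    _ = ‖a‖ ^ 2 + ((2 * α) * inner ℝ a b + α ^ 2 * ∫ s, ‖c s‖ ^ 2 ∂P) := by
        have hi12 : Integrable (fun s => (2 * α) * inner ℝ a (c s) + α ^ 2 * ‖c s‖ ^ 2) P :=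
          hi1.add hi2
        rw [integral_add (integrable_const _) hi12, integral_const,
          integral_add hi1 hi2, integral_const_mul, integral_const_mul]
        have : ∫ s, (inner ℝ a (c s) : ℝ) ∂P = inner ℝ a b := by
          rw [integral_inner hic]
          simp only [hc]
          rw [hunbiased]
        rw [this]; simp
    _ ≤ ‖a‖ ^ 2 + ((2 * α) * inner ℝ a b + α * ‖b‖ ^ 2) := by
        have hm : ∫ s, ‖c s‖ ^ 2 ∂P ≤ (ω + 1) * ‖b‖ ^ 2 := hmoment _
        have h2 : α * (ω + 1) ≤ 1 := by
          rw [le_div_iff₀ (by linarith)] at hα; linarith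
        nlinarith [mul_le_mul_of_nonneg_left hm (sq_nonneg α),
          mul_le_mul_of_nonneg_left h2 (mul_nonneg hα0.le (sq_nonneg ‖b‖))]
    _ = (1 - α) * ‖a‖ ^ 2 + α * ‖a + b‖ ^ 2 := by
        rw [norm_add_sq_real]; ring
    _ = (1 - α) * ‖h - xstar‖ ^ 2 + α * ‖x - xstar‖ ^ 2 := by
        have : a + b = x - xstar := by rw [ha, hb]; abel
        rw [this]
end

section
/- Let x_t, x_* ∈ ℝ^d, η ∈ [0,1], and let x^n_{t,1},…,x^n_{t,M}, h_{t,1},…,h_{t,M}, x^n_{*,1},…,x^n_{*,M} ∈ ℝ^d be vectors with (1/M)Σ_m x^n_{*,m} = x_*. Let C_1,…,C_M be independent unbiased compressors with variance parameter ω, and set x_{t+1} = (1−η)x_t + η(1/M)Σ_{m=1}^M (C_m(x^n_{t,m} − h_{t,m}) + h_{t,m}). Then E[‖x_{t+1} − x_*‖² | x_t, (h_{t,m}), (x^n_{t,m})] ≤ (η²ω/M²)Σ_{m=1}^M ‖x^n_{t,m} − h_{t,m}‖² + (1−η)‖x_t − x_*‖² + (η/M)Σ_{m=1}^M ‖x^n_{t,m}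 − x^n_{*,m}‖². -/
open MeasureTheory ProbabilityTheory

local notation "⟪" x ", " y "⟫" => @inner ℝ _ _ x y

section aux

variable {F : Type*} [NormedAddCommGroup F] [InnerProductSpace ℝ F]

lemma convex_norm_sq_bound (η : ℝ) (h0 : 0 ≤ η) (h1 : η ≤ 1) (a b : F) :
    ‖(1 - η) • a + η • b‖ ^ 2 ≤ (1 - η) * ‖a‖ ^ 2 + η * ‖b‖ ^ 2 := by
  have hcs : ⟪a, b⟫ ≤ ‖a‖ * ‖b‖ := real_inner_le_norm a b
  have h1' : (0:ℝ) ≤ 1 - η := by linarith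
  rw [norm_add_sq_real, norm_smul, norm_smul, real_inner_smul_left, real_inner_smul_right,
    Real.norm_eq_abs, Real.norm_eq_abs, abs_of_nonneg h0, abs_of_nonneg h1', mul_pow, mul_pow]
  nlinarith [mul_nonneg (mul_nonneg h1' h0) (sq_nonneg (‖a‖ - ‖b‖)),
    mul_nonneg (mul_nonneg h1' h0) (sub_nonneg.2 hcs)]

lemma norm_avg_sq_le {M : ℕ} (hM : 0 < M) (z : Fin M → F) :
    ‖(1 / (M:ℝ)) • ∑ m, z m‖ ^ 2 ≤ (1 / (M:ℝ)) * ∑ m, ‖z m‖ ^ 2 := by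
  have hMR : (0:ℝ) < M := by exact_mod_cast hM
  have h1 : ‖∑ m, z m‖ ≤ ∑ m, ‖z m‖ := norm_sum_le _ _
  have h2 : (∑ m, ‖z m‖) ^ 2 ≤ (M:ℝ) * ∑ m, ‖z m‖ ^ 2 := by
    simpa using sq_sum_le_card_mul_sum_sq (s := (Finset.univ : Finset (Fin M)))
      (f := fun m => ‖z m‖)
  have h3 : ‖∑ m, z m‖ ^ 2 ≤ (M:ℝ) * ∑ m, ‖z m‖ ^ 2 :=
    le_trans (pow_le_pow_left₀ (norm_nonneg _) h1 2) h2
  calc ‖(1 / (M:ℝ)) • ∑ m, z m‖ ^ 2 = (1/(M:ℝ))^2 * ‖∑ m, z m‖ ^ 2 := by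
        rw [norm_smul, mul_pow, Real.norm_eq_abs, sq_abs]
    _ ≤ (1/(M:ℝ))^2 * ((M:ℝ) * ∑ m, ‖z m‖ ^ 2) :=
        mul_le_mul_of_nonneg_left h3 (by positivity)
    _ = (1 / (M:ℝ)) * ∑ m, ‖z m‖ ^ 2 := by field_simp

end aux

/-- Lemma 2: for the aggregation step
`x_{t+1} = (1−η)x_t + η(1/M)Σ_m (C_m(x^n_{t,m} − h_{t,m}) + h_{t,m})` with independent
unbiased compressors of variance parameter `ω`, and `(1/M)Σ_m x^n_{*,m} = x_*`,
`E[‖x_{t+1} − x_*‖²] ≤ (η²ω/M²)Σ_m ‖x^n_{t,m} − h_{t,m}‖² + (1−η)‖x_t − x_*‖²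
  + (η/M)Σ_m ‖x^n_{t,m} − x^n_{*,m}‖²`. -/
theorem stmt_9 {d M : ℕ} (hM : 0 < M) {Ω : Type*} [MeasurableSpace Ω] (P : Measure Ω)
    [IsProbabilityMeasure P] (ω : ℝ) (hω : 0 ≤ ω)
    (C : Fin M → EuclideanSpace ℝ (Fin d) → Ω → EuclideanSpace ℝ (Fin d))
    (hint : ∀ m y, Integrable (fun s => C m y s) P)
    (hint2 : ∀ m y, Integrable (fun s => ‖C m y s‖ ^ 2) P)
    (hunbiased : ∀ m y, ∫ s, C m y s ∂P = y)
    (hvar : ∀ m y, ∫ s, ‖C m y s - y‖ ^ 2 ∂P ≤ ω * ‖y‖ ^ 2)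
    (η : ℝ) (hη0 : 0 ≤ η) (hη1 : η ≤ 1)
    (xt xstar : EuclideanSpace ℝ (Fin d))
    (xn h xnstar : Fin M → EuclideanSpace ℝ (Fin d))
    (havg : (1 / (M : ℝ)) • (∑ m : Fin M, xnstar m) = xstar)
    (hindep : iIndepFun (m := fun _ : Fin M => (inferInstance :
        MeasurableSpace (EuclideanSpace ℝ (Fin d))))
      (fun m s => C m (xn m - h m) s) P) :
    ∫ s, ‖((1 - η) • xt +
          η • ((1 / (M : ℝ)) • (∑ m : Fin M, (C m (xn m - h m) s + h m)))) - xstar‖ ^ 2 ∂P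
      ≤ (η ^ 2 * ω / (M : ℝ) ^ 2) * ∑ m : Fin M, ‖xn m - h m‖ ^ 2
        + (1 - η) * ‖xt - xstar‖ ^ 2
        + (η / (M : ℝ)) * ∑ m : Fin M, ‖xn m - xnstar m‖ ^ 2 := by
  classical
  set y : Fin M → EuclideanSpace ℝ (Fin d) := fun m => xn m - h m with hy
  set W : Fin M → Ω → EuclideanSpace ℝ (Fin d) := fun m s => C m (y m) s - y m with hW
  have hWint : ∀ m, Integrable (W m) P := fun m => (hint m (y m)).sub (integrable_const _)
  have hWmean : ∀ m, ∫ s, W m s ∂P = 0 := by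
    intro m
    rw [hW]
    rw [integral_sub (hint m (y m)) (integrable_const _), hunbiased, integral_const]
    simp
  have hWsq : ∀ m, Integrable (fun s => ‖W m s‖ ^ 2) P := by
    intro m
    have heq : (fun s => ‖W m s‖ ^ 2)
        = fun s => ‖C m (y m) s‖ ^ 2 - 2 * ⟪C m (y m) s, y m⟫ + ‖y m‖ ^ 2 := by
      funext s
      rw [hW]
      simp only
      rw [norm_sub_sq_real]
    rw [heq]
    exact ((hint2 m (y m)).sub (((hint m (y m)).inner_const (y m)).const_mul 2)).add
      (integrable_const _)
  have hInnerInt : ∀ i j, Integrable (fun s => ⟪W i s, W j s⟫) P := by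
    intro i j
    refine Integrable.mono' (((hWsq i).add (hWsq j)).div_const 2)
      ((hWint i).1.inner (hWint j).1) ?_
    filter_upwards with s
    have h1 : |⟪W i s, W j s⟫| ≤ ‖W i s‖ * ‖W j s‖ := abs_real_inner_le_norm _ _
    have h2 : ‖W i s‖ * ‖W j s‖ ≤ (‖W i s‖ ^ 2 + ‖W j s‖ ^ 2) / 2 := by
      nlinarith [sq_nonneg (‖W i s‖ - ‖W j s‖)]
    calc ‖⟪W i s, W j s⟫‖ = |⟪W i s, W j s⟫| := Real.norm_eq_abs _
      _ ≤ _ := le_trans h1 h2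
  have hproj : ∀ k : Fin d, Measurable fun v : EuclideanSpace ℝ (Fin d) => v k :=
    fun k => (measurable_pi_apply k).comp (WithLp.measurable_ofLp 2 _)
  have hWcoordInt : ∀ m k, Integrable (fun s => W m s k) P := by
    intro m k
    have := (EuclideanSpace.proj k : EuclideanSpace ℝ (Fin d) →L[ℝ] ℝ).integrable_comp (hWint m)
    simpa using this
  have hWcoordMean : ∀ m k, ∫ s, W m s k ∂P = 0 := by
    intro m k
    have := (EuclideanSpace.proj k :
      EuclideanSpace ℝ (Fin d) →L[ℝ] ℝ).integral_comp_comm (hWint m)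
    simpa [hWmean m] using this
  have hcross : ∀ i j, i ≠ j → ∫ s, ⟪W i s, W j s⟫ ∂P = 0 := by
    intro i j hij
    have hpair : IndepFun (fun s => C i (y i) s) (fun s => C j (y j) s) P :=
      hindep.indepFun hij
    have hWindep : IndepFun (W i) (W j) P :=
      hpair.comp (measurable_id.sub_const (y i)) (measurable_id.sub_const (y j))
    have hk : ∀ k : Fin d, IndepFun (fun s => W i s k) (fun s => W j s k) P :=
      fun k => hWindep.comp (hproj k) (hproj k)
    have heq : (fun s => ⟪W i s, W j s⟫) = fun s => ∑ k : Fin d, W i s k * W j s k := by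
      funext s
      simp [PiLp.inner_apply, RCLike.inner_apply, conj_trivial, mul_comm]
    have hmulint : ∀ k : Fin d, Integrable (fun s => W i s k * W j s k) P := fun k =>
      (hk k).integrable_mul (hWcoordInt i k) (hWcoordInt j k)
    rw [heq, integral_finset_sum _ (fun k _ => hmulint k)]
    refine Finset.sum_eq_zero fun k _ => ?_
    have := (hk k).integral_fun_mul_eq_mul_integral (hWcoordInt i k).1 (hWcoordInt j k).1
    simpa [hWcoordMean] using this
  have hT : ∀ s, ‖∑ m, W m s‖ ^ 2 = ∑ i, ∑ j, ⟪W i s, W j s⟫ := by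
    intro s
    rw [← real_inner_self_eq_norm_sq, sum_inner]
    exact Finset.sum_congr rfl fun i _ => inner_sum _ _ _
  have hTint : Integrable (fun s => ‖∑ m, W m s‖ ^ 2) P := by
    have heq : (fun s => ‖∑ m, W m s‖ ^ 2) = fun s => ∑ i, ∑ j : Fin M, ⟪W i s, W j s⟫ :=
      funext hT
    rw [heq]
    exact integrable_finset_sum _ fun i _ => integrable_finset_sum _ fun j _ => hInnerInt i j
  have hTvar : ∫ s, ‖∑ m, W m s‖ ^ 2 ∂P ≤ ω * ∑ m, ‖y m‖ ^ 2 := by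
    have h1 : ∫ s, ‖∑ m, W m s‖ ^ 2 ∂P = ∑ i, ∫ s, ‖W i s‖ ^ 2 ∂P := by
      simp_rw [hT]
      rw [integral_finset_sum _ (fun i _ => integrable_finset_sum _ fun j _ => hInnerInt i j)]
      refine Finset.sum_congr rfl fun i _ => ?_
      rw [integral_finset_sum _ (fun j _ => hInnerInt i j), Finset.sum_eq_single i]
      · simp_rw [real_inner_self_eq_norm_sq]
      · exact fun j _ hj => hcross i j (Ne.symm hj)
      · simp
    rw [h1]
    calc ∑ i, ∫ s, ‖W i s‖ ^ 2 ∂P ≤ ∑ i, ω * ‖y i‖ ^ 2 :=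
          Finset.sum_le_sum fun i _ => hvar i (y i)
      _ = ω * ∑ m, ‖y m‖ ^ 2 := by rw [Finset.mul_sum]
  set μv : EuclideanSpace ℝ (Fin d) :=
    (1 - η) • xt + η • ((1 / (M:ℝ)) • ∑ m, xn m) - xstar with hμv
  have hdecomp : ∀ s, ((1 - η) • xt
        + η • ((1 / (M:ℝ)) • (∑ m, (C m (y m) s + h m)))) - xstar
      = μv + (η / (M:ℝ)) • ∑ m, W m s := by
    intro s
    have hsum : ∑ m, (C m (y m) s + h m) = (∑ m, W m s) + ∑ m, xn m := by
      rw [← Finset.sum_add_distrib]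
      refine Finset.sum_congr rfl fun m _ => ?_
      rw [hW, hy]
      simp only
      abel
    rw [hsum, hμv]
    module
  have hnorm : ∀ s, ‖μv + (η / (M:ℝ)) • ∑ m, W m s‖ ^ 2
      = ‖μv‖ ^ 2 + 2 * (η / (M:ℝ)) * ⟪μv, ∑ m, W m s⟫ + (η / (M:ℝ)) ^ 2 * ‖∑ m, W m s‖ ^ 2 := by
    intro s
    rw [norm_add_sq_real, real_inner_smul_right, norm_smul, mul_pow, Real.norm_eq_abs, sq_abs]
    ring
  have hTint' : Integrable (fun s => ∑ m, W m s) P :=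
    integrable_finset_sum _ fun m _ => hWint m
  have hTmean : ∫ s, ∑ m, W m s ∂P = 0 := by
    rw [integral_finset_sum _ fun m _ => hWint m]
    simp [hWmean]
  have key : ∫ s, ‖((1 - η) • xt
        + η • ((1 / (M:ℝ)) • (∑ m, (C m (y m) s + h m)))) - xstar‖ ^ 2 ∂P
      = ‖μv‖ ^ 2 + (η / (M:ℝ)) ^ 2 * ∫ s, ‖∑ m, W m s‖ ^ 2 ∂P := by
    simp_rw [hdecomp, hnorm]
    have hi1 : Integrable (fun s => 2 * (η / (M:ℝ)) * ⟪μv, ∑ m, W m s⟫) P :=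
      (hTint'.const_inner μv).const_mul _
    have hi2 : Integrable (fun s => ‖μv‖ ^ 2 + 2 * (η / (M:ℝ)) * ⟪μv, ∑ m, W m s⟫) P :=
      (integrable_const _).add hi1
    have hi3 : Integrable (fun s => (η / (M:ℝ)) ^ 2 * ‖∑ m, W m s‖ ^ 2) P :=
      hTint.const_mul _
    rw [integral_add hi2 hi3, integral_add (integrable_const _) hi1,
      integral_const, integral_const_mul, integral_const_mul, integral_inner hTint' μv, hTmean]
    simp
  rw [key]
  have hμbound : ‖μv‖ ^ 2 ≤ (1 - η) * ‖xt - xstar‖ ^ 2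
      + (η / (M:ℝ)) * ∑ m, ‖xn m - xnstar m‖ ^ 2 := by
    have h2 : μv = (1 - η) • (xt - xstar) + η • (((1 / (M:ℝ)) • ∑ m, xn m) - xstar) := by
      rw [hμv]; module
    have h3 := convex_norm_sq_bound η hη0 hη1 (xt - xstar) (((1 / (M:ℝ)) • ∑ m, xn m) - xstar)
    have h4 : ((1 / (M:ℝ)) • ∑ m, xn m) - xstar = (1 / (M:ℝ)) • ∑ m, (xn m - xnstar m) := by
      rw [← havg, ← smul_sub, ← Finset.sum_sub_distrib]
    have h5 := norm_avg_sq_le hM (fun m => xn m - xnstar m)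
    have h6 := mul_le_mul_of_nonneg_left h5 hη0
    calc ‖μv‖ ^ 2 ≤ (1 - η) * ‖xt - xstar‖ ^ 2
          + η * ‖((1 / (M:ℝ)) • ∑ m, xn m) - xstar‖ ^ 2 := by rw [h2]; exact h3
      _ = (1 - η) * ‖xt - xstar‖ ^ 2
          + η * ‖(1 / (M:ℝ)) • ∑ m, (xn m - xnstar m)‖ ^ 2 := by rw [h4]
      _ ≤ (1 - η) * ‖xt - xstar‖ ^ 2
          + η * ((1 / (M:ℝ)) * ∑ m, ‖xn m - xnstar m‖ ^ 2) := by linarith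
      _ = (1 - η) * ‖xt - xstar‖ ^ 2
          + (η / (M:ℝ)) * ∑ m, ‖xn m - xnstar m‖ ^ 2 := by ring
  have hvarterm : (η / (M:ℝ)) ^ 2 * ∫ s, ‖∑ m, W m s‖ ^ 2 ∂P
      ≤ (η ^ 2 * ω / (M:ℝ) ^ 2) * ∑ m, ‖y m‖ ^ 2 := by
    calc (η / (M:ℝ)) ^ 2 * ∫ s, ‖∑ m, W m s‖ ^ 2 ∂P
        ≤ (η / (M:ℝ)) ^ 2 * (ω * ∑ m, ‖y m‖ ^ 2) :=
          mul_le_mul_of_nonneg_left hTvar (by positivity)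
      _ = (η ^ 2 * ω / (M:ℝ) ^ 2) * ∑ m, ‖y m‖ ^ 2 := by
          rw [div_pow]; ring
  linarith
end

section
/- Let f_1,…,f_n : ℝ^d → ℝ each be convex and L-smooth, let f = (1/n)Σ f_i, and let x_*, y ∈ ℝ^d with ∇f(x_*) = 0. Define σ̃² = (1/n) Σ_{i=1}^n ‖∇f_i(x_*) − ∇f_i(y) + ∇f(y) − ∇f(x_*)‖². Then σ̃² ≤ 8L·D_f(y, x_*) ≤ 4L²‖y − x_*‖², where D_f(y,x_*) = f(y) − f(x_*) − ⟨∇f(x_*), y − x_*⟩. -/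
open scoped RealInnerProductSpace BigOperators

variable {d : ℕ}

local notation "E" => EuclideanSpace ℝ (Fin d)

/-- `fderiv` applied equals inner product with gradient. -/
lemma fderiv_apply_eq_inner_gradient {h : E → ℝ} {x : E} (hd : DifferentiableAt ℝ h x) (v : E) :
    fderiv ℝ h x v = ⟪gradient h x, v⟫ := by
  rw [hd.hasGradientAt.hasFDerivAt.fderiv]
  exact InnerProductSpace.toDual_apply_apply

/-- First-order convexity from gradient monotonicity. -/
lemma convex_lower {h : E → ℝ} (hd : Differentiable ℝ h)
    (hm : ∀ a b : E, (0 : ℝ) ≤ ⟪gradient h a - gradient h b, a - b⟫) (x y : E) :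
    h y + ⟪gradient h y, x - y⟫ ≤ h x := by
  set γ : ℝ → E := fun t => y + t • (x - y) with hγ
  have hder : ∀ t : ℝ, HasDerivAt (fun s => h (γ s)) ⟪gradient h (γ t), x - y⟫ t := by
    intro t
    have hγd : HasDerivAt γ (x - y) t := by
      simpa [hγ] using ((hasDerivAt_id t).smul_const (x - y)).const_add y
    have := (hd (γ t)).hasGradientAt.hasFDerivAt.comp_hasDerivAt t hγd
    rw [InnerProductSpace.toDual_apply_apply] at this; exact this
  obtain ⟨c, hc, hceq⟩ := exists_hasDerivAt_eq_slope (fun s => h (γ s))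
    (fun t => ⟪gradient h (γ t), x - y⟫) one_pos
    (fun t _ => (hder t).continuousAt.continuousWithinAt) (fun t _ => hder t)
  have hγ0 : γ 0 = y := by simp [hγ]
  have hγ1 : γ 1 = x := by simp [hγ]
  rw [hγ0, hγ1] at hceq
  have hslope : ⟪gradient h (γ c), x - y⟫ = h x - h y := by
    rw [hceq]; ring
  have hmono : ⟪gradient h y, x - y⟫ ≤ ⟪gradient h (γ c), x - y⟫ := by
    have h0 := hm (γ c) y
    have hγcy : γ c - y = c • (x - y) := by simp [hγ]
    rw [hγcy, real_inner_smul_right, inner_sub_left] at h0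
    nlinarith [hc.1]
  linarith [hmono, hslope.symm ▸ hmono]

/-- Bregman lower bound on gradient difference for convex smooth functions. -/
lemma breg_bound {L : ℝ} (hL : 0 < L) {h : E → ℝ} (hd : Differentiable ℝ h)
    (hm : ∀ a b : E, (0 : ℝ) ≤ ⟪gradient h a - gradient h b, a - b⟫)
    (hs : ∀ a b : E, h a ≤ h b + ⟪gradient h b, a - b⟫ + L / 2 * ‖a - b‖ ^ 2) (x y : E) :
    ‖gradient h x - gradient h y‖ ^ 2 ≤ 2 * L * (h x - h y - ⟪gradient h y, x - y⟫) := by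
  set g : E := gradient h x - gradient h y with hg
  set z : E := x - L⁻¹ • g with hz
  have h1 : h z ≤ h x + ⟪gradient h x, z - x⟫ + L / 2 * ‖z - x‖ ^ 2 := hs z x
  have h2 : h y + ⟪gradient h y, z - y⟫ ≤ h z := convex_lower hd hm z y
  have hzx : z - x = -(L⁻¹ • g) := by rw [hz]; abel
  have hzy : z - y = (x - y) - L⁻¹ • g := by rw [hz]; abel
  have e1 : ⟪gradient h x, z - x⟫ = -(L⁻¹ * ⟪gradient h x, g⟫) := by
    rw [hzx, inner_neg_right, real_inner_smul_right]
  have e2 : ‖z - x‖ ^ 2 = L⁻¹ ^ 2 * ‖g‖ ^ 2 := by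
    rw [hzx, norm_neg, norm_smul]
    simp [abs_of_pos (inv_pos.2 hL), mul_pow]
  have e3 : ⟪gradient h y, z - y⟫ = ⟪gradient h y, x - y⟫ - L⁻¹ * ⟪gradient h y, g⟫ := by
    rw [hzy, inner_sub_right, real_inner_smul_right]
  have e4 : ⟪gradient h x, g⟫ - ⟪gradient h y, g⟫ = ‖g‖ ^ 2 := by
    rw [← inner_sub_left, ← hg, real_inner_self_eq_norm_sq]
  have hLinv : L * L⁻¹ = 1 := mul_inv_cancel₀ hL.ne'
  rw [e1, e2] at h1
  rw [e3] at h2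
  have e5 : L / 2 * (L⁻¹ ^ 2 * ‖g‖ ^ 2) = L⁻¹ / 2 * ‖g‖ ^ 2 := by
    field_simp
  have e4' : L⁻¹ * ⟪gradient h x, g⟫ - L⁻¹ * ⟪gradient h y, g⟫ = L⁻¹ * ‖g‖ ^ 2 := by
    rw [← mul_sub, e4]
  have key : L⁻¹ / 2 * ‖g‖ ^ 2 ≤ h x - h y - ⟪gradient h y, x - y⟫ := by linarith
  have := mul_le_mul_of_nonneg_left key (by positivity : (0:ℝ) ≤ 2 * L)
  calc ‖g‖ ^ 2 = 2 * L * (L⁻¹ / 2 * ‖g‖ ^ 2) := by field_simp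
    _ ≤ 2 * L * (h x - h y - ⟪gradient h y, x - y⟫) := this

set_option maxHeartbeats 1600000 in
/-- Lemma 5: for convex `L`-smooth `f_i` with average `f`, `∇f(x_*) = 0`, the variance of the
perturbed reformulation satisfies
`σ̃² = (1/n)Σᵢ‖∇fᵢ(x_*) − ∇fᵢ(y) + ∇f(y) − ∇f(x_*)‖² ≤ 8L·D_f(y,x_*) ≤ 4L²‖y − x_*‖²`. -/
theorem stmt_10 {d n : ℕ} (hn : 0 < n) (L : ℝ) (hL : 0 < L)
    (f : Fin n → EuclideanSpace ℝ (Fin d) → ℝ)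
    (hdiff : ∀ i, Differentiable ℝ (f i))
    (hconv : ∀ i x y, (0 : ℝ) ≤ ⟪gradient (f i) x - gradient (f i) y, x - y⟫)
    (hsmooth : ∀ i x y, f i x ≤ f i y + ⟪gradient (f i) y, x - y⟫ + L / 2 * ‖x - y‖ ^ 2)
    (F : EuclideanSpace ℝ (Fin d) → ℝ)
    (hF : F = fun x => (1 / (n : ℝ)) * ∑ i : Fin n, f i x)
    (xstar y : EuclideanSpace ℝ (Fin d))
    (hstat : gradient F xstar = 0) :
    (1 / (n : ℝ)) * ∑ i : Fin n,
        ‖gradient (f i) xstar - gradient (f i) y + gradient F y - gradient F xstar‖ ^ 2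
      ≤ 8 * L * (F y - F xstar - ⟪gradient F xstar, y - xstar⟫) ∧
    8 * L * (F y - F xstar - ⟪gradient F xstar, y - xstar⟫)
      ≤ 4 * L ^ 2 * ‖y - xstar‖ ^ 2 := by
  have hnR : (0:ℝ) < (n:ℝ) := by exact_mod_cast hn
  -- gradient of F
  have hgradF : ∀ x, HasGradientAt F ((1/(n:ℝ)) • ∑ i : Fin n, gradient (f i) x) x := by
    intro x
    have hsum : HasFDerivAt (fun z => ∑ i : Fin n, f i z)
        (∑ i : Fin n, InnerProductSpace.toDual ℝ (EuclideanSpace ℝ (Fin d)) (gradient (f i) x))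
        x := HasFDerivAt.fun_sum fun i _ => (hdiff i x).hasGradientAt.hasFDerivAt
    have hmul := hsum.const_mul (1/(n:ℝ))
    have hFd : HasFDerivAt F
        (InnerProductSpace.toDual ℝ (EuclideanSpace ℝ (Fin d))
          ((1/(n:ℝ)) • ∑ i : Fin n, gradient (f i) x)) x := by
      rw [hF]
      refine hmul.congr_fderiv ?_
      simp [map_sum]
    exact hasGradientAt_iff_hasFDerivAt.2 hFd
  have hFgrad : ∀ x, gradient F x = (1/(n:ℝ)) • ∑ i : Fin n, gradient (f i) x :=
    fun x => (hgradF x).gradient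
  have hGxstar : (1/(n:ℝ)) • ∑ i : Fin n, gradient (f i) xstar = 0 := by
    rw [← hFgrad]; exact hstat
  -- Bregman divergences
  set D : Fin n → ℝ := fun i => f i y - f i xstar - ⟪gradient (f i) xstar, y - xstar⟫ with hD
  have hA : ∀ i, ‖gradient (f i) y - gradient (f i) xstar‖ ^ 2 ≤ 2 * L * D i :=
    fun i => breg_bound hL (hdiff i) (hconv i) (hsmooth i) y xstar
  have hBi : ∀ i, D i ≤ L / 2 * ‖y - xstar‖ ^ 2 := by
    intro i
    have := hsmooth i y xstar
    simp only [hD]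
    linarith
  -- sum of D equals F y - F xstar
  have hinner0 : ⟪∑ i : Fin n, gradient (f i) xstar, y - xstar⟫ = 0 := by
    have : ⟪(1/(n:ℝ)) • ∑ i : Fin n, gradient (f i) xstar, y - xstar⟫ = 0 := by
      rw [hGxstar, inner_zero_left]
    rw [real_inner_smul_left] at this
    have h1n : (1/(n:ℝ)) ≠ 0 := by positivity
    exact (mul_eq_zero.1 this).resolve_left h1n
  have hsumD : (1/(n:ℝ)) * ∑ i : Fin n, D i = F y - F xstar := by
    simp only [hD, hF]
    rw [Finset.sum_sub_distrib, Finset.sum_sub_distrib, ← sum_inner, hinner0]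
    ring
  have hRHS : F y - F xstar - ⟪gradient F xstar, y - xstar⟫ = (1/(n:ℝ)) * ∑ i : Fin n, D i := by
    rw [hstat, inner_zero_left, sub_zero, hsumD]
  -- the perturbation vector b
  set b : EuclideanSpace ℝ (Fin d) := gradient F y - gradient F xstar with hbdef
  have hb : b = (1/(n:ℝ)) • ∑ i : Fin n, (gradient (f i) y - gradient (f i) xstar) := by
    rw [hbdef, hFgrad y, hstat, sub_zero, Finset.sum_sub_distrib, smul_sub, hGxstar, sub_zero]
  set S : ℝ := ∑ i : Fin n, ‖gradient (f i) y - gradient (f i) xstar‖ ^ 2 with hSdef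
  have hS2 : S ≤ 2 * L * ∑ i : Fin n, D i := by
    rw [hSdef, Finset.mul_sum]
    exact Finset.sum_le_sum fun i _ => hA i
  have hbnorm : ‖b‖ ≤ (1/(n:ℝ)) * ∑ i : Fin n, ‖gradient (f i) y - gradient (f i) xstar‖ := by
    rw [hb, norm_smul]
    have : |((1:ℝ)/(n:ℝ))| = 1/(n:ℝ) := abs_of_pos (by positivity)
    rw [Real.norm_eq_abs, this]
    exact mul_le_mul_of_nonneg_left (norm_sum_le _ _) (by positivity)
  have hbsq : ‖b‖ ^ 2 ≤ (1/(n:ℝ)) * S := by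
    have h1 : ‖b‖ ^ 2 ≤ ((1/(n:ℝ)) * ∑ i : Fin n, ‖gradient (f i) y - gradient (f i) xstar‖) ^ 2 :=
      pow_le_pow_left₀ (norm_nonneg b) hbnorm 2
    have h2 : (∑ i : Fin n, ‖gradient (f i) y - gradient (f i) xstar‖) ^ 2 ≤ (n:ℝ) * S := by
      have := sq_sum_le_card_mul_sum_sq
        (s := Finset.univ) (f := fun i : Fin n => ‖gradient (f i) y - gradient (f i) xstar‖)
      simpa [hSdef] using this
    calc ‖b‖ ^ 2 ≤ ((1/(n:ℝ)))^2 * (∑ i : Fin n, ‖gradient (f i) y - gradient (f i) xstar‖) ^ 2 := by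
          rw [mul_pow] at h1; exact h1
      _ ≤ ((1/(n:ℝ)))^2 * ((n:ℝ) * S) := by
          exact mul_le_mul_of_nonneg_left h2 (by positivity)
      _ = (1/(n:ℝ)) * S := by field_simp
  -- termwise bound
  have hterm : ∀ i : Fin n,
      ‖gradient (f i) xstar - gradient (f i) y + gradient F y - gradient F xstar‖ ^ 2
        ≤ 2 * ‖gradient (f i) y - gradient (f i) xstar‖ ^ 2 + 2 * ‖b‖ ^ 2 := by
    intro i
    have hre : gradient (f i) xstar - gradient (f i) y + gradient F y - gradient F xstar
        = (gradient (f i) xstar - gradient (f i) y) + b := by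
      rw [hbdef]; abel
    rw [hre]
    have htri : ‖(gradient (f i) xstar - gradient (f i) y) + b‖
        ≤ ‖gradient (f i) xstar - gradient (f i) y‖ + ‖b‖ := norm_add_le _ _
    have hrev : ‖gradient (f i) xstar - gradient (f i) y‖
        = ‖gradient (f i) y - gradient (f i) xstar‖ := norm_sub_rev _ _
    nlinarith [norm_nonneg ((gradient (f i) xstar - gradient (f i) y) + b),
      norm_nonneg (gradient (f i) xstar - gradient (f i) y), norm_nonneg b,
      sq_nonneg (‖gradient (f i) y - gradient (f i) xstar‖ - ‖b‖)]
  -- first inequality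
  have hsum1 : ∑ i : Fin n,
      ‖gradient (f i) xstar - gradient (f i) y + gradient F y - gradient F xstar‖ ^ 2
        ≤ 2 * S + 2 * (n:ℝ) * ‖b‖ ^ 2 := by
    calc ∑ i : Fin n, ‖gradient (f i) xstar - gradient (f i) y + gradient F y - gradient F xstar‖ ^ 2
        ≤ ∑ i : Fin n, (2 * ‖gradient (f i) y - gradient (f i) xstar‖ ^ 2 + 2 * ‖b‖ ^ 2) :=
          Finset.sum_le_sum fun i _ => hterm i
      _ = 2 * S + 2 * (n:ℝ) * ‖b‖ ^ 2 := by
          rw [Finset.sum_add_distrib, ← Finset.mul_sum, ← hSdef]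
          simp [Finset.card_univ]
          ring
  have hDsum_nonneg : 0 ≤ ∑ i : Fin n, D i := by
    have : ∀ i : Fin n, 0 ≤ D i := by
      intro i
      have := hA i
      nlinarith [sq_nonneg ‖gradient (f i) y - gradient (f i) xstar‖]
    exact Finset.sum_nonneg fun i _ => this i
  clear_value D b S
  constructor
  · rw [hRHS]
    have hnb : (n:ℝ) * ‖b‖ ^ 2 ≤ S := by
      have := mul_le_mul_of_nonneg_left hbsq (le_of_lt hnR)
      calc (n:ℝ) * ‖b‖ ^ 2 ≤ (n:ℝ) * ((1/(n:ℝ)) * S) := this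
        _ = S := by field_simp
    have htot : ∑ i : Fin n,
        ‖gradient (f i) xstar - gradient (f i) y + gradient F y - gradient F xstar‖ ^ 2
          ≤ 4 * S := by linarith
    calc (1/(n:ℝ)) * ∑ i : Fin n,
          ‖gradient (f i) xstar - gradient (f i) y + gradient F y - gradient F xstar‖ ^ 2
        ≤ (1/(n:ℝ)) * (4 * S) := mul_le_mul_of_nonneg_left htot (by positivity)
      _ ≤ (1/(n:ℝ)) * (4 * (2 * L * ∑ i : Fin n, D i)) := by
          have := mul_le_mul_of_nonneg_left hS2 (by norm_num : (0:ℝ) ≤ 4)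
          exact mul_le_mul_of_nonneg_left this (by positivity)
      _ = 8 * L * ((1/(n:ℝ)) * ∑ i : Fin n, D i) := by ring
  · rw [hRHS]
    have hsumB : ∑ i : Fin n, D i ≤ (n:ℝ) * (L / 2 * ‖y - xstar‖ ^ 2) := by
      calc ∑ i : Fin n, D i ≤ ∑ _i : Fin n, (L / 2 * ‖y - xstar‖ ^ 2) :=
            Finset.sum_le_sum fun i _ => hBi i
        _ = (n:ℝ) * (L / 2 * ‖y - xstar‖ ^ 2) := by
            simp [Finset.card_univ]
    calc 8 * L * ((1/(n:ℝ)) * ∑ i : Fin n, D i)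
        ≤ 8 * L * ((1/(n:ℝ)) * ((n:ℝ) * (L / 2 * ‖y - xstar‖ ^ 2))) := by
          have := mul_le_mul_of_nonneg_left hsumB (by positivity : (0:ℝ) ≤ 1/(n:ℝ))
          exact mul_le_mul_of_nonneg_left this (by positivity)
      _ = 4 * L ^ 2 * ‖y - xstar‖ ^ 2 := by field_simp; ring
end

section
/- Let X_1,…,X_n ∈ ℝ^d be fixed vectors with mean X̄ = (1/n)Σ X_j, and let π be a uniformly random permutation of {1,…,n}. For 1 ≤ i ≤ n−1 let X̄_π = (1/i) Σ_{j=0}^{i−1} X_{π_j} be the average of the first i entries under π. Then E[‖X̄_π‖²] = ‖X̄‖² + (n−i)/(i(n−1)) · σ², where σ² = (1/n) Σ_{j=1}^n ‖X_j − X̄‖². -/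
open scoped BigOperators

private lemma sumA {N : ℕ} (f : Fin (N+1) → ℝ) (j : Fin (N+1)) :
    ∑ π : Equiv.Perm (Fin (N+1)), f (π j) = (N.factorial : ℝ) * ∑ a, f a := by
  have h0 : ∑ π : Equiv.Perm (Fin (N+1)), f (π 0) = ∑ π : Equiv.Perm (Fin (N+1)), f (π j) := by
    rw [← Equiv.sum_comp (Equiv.mulRight (Equiv.swap 0 j)) (fun π => f (π j))]
    simp [Equiv.Perm.mul_apply, Equiv.swap_apply_right]
  rw [← h0, ← Equiv.sum_comp Equiv.Perm.decomposeFin.symm (fun π => f (π 0))]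
  simp [Fintype.sum_prod_type, Fintype.card_perm]
  rw [← Finset.mul_sum]

private lemma sumB {N : ℕ} (g : Fin (N+2) → Fin (N+2) → ℝ) (j k : Fin (N+2)) (hjk : j ≠ k) :
    ∑ π : Equiv.Perm (Fin (N+2)), g (π j) (π k)
      = (N.factorial : ℝ) * ∑ a, ((∑ b, g a b) - g a a) := by
  have hc0 : Equiv.swap 0 j k ≠ 0 := by
    intro h
    apply hjk
    have h2 : Equiv.swap 0 j k = Equiv.swap 0 j j := by
      rw [h, Equiv.swap_apply_right]
    exact ((Equiv.swap 0 j).injective h2).symm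
  set τ : Equiv.Perm (Fin (N+2)) := Equiv.swap 0 j * Equiv.swap 1 (Equiv.swap 0 j k) with hτ
  have hτ0 : τ 0 = j := by
    simp [hτ, Equiv.Perm.mul_apply,
      Equiv.swap_apply_of_ne_of_ne (by norm_num : (0 : Fin (N+2)) ≠ 1) (Ne.symm hc0)]
  have hτ1 : τ 1 = k := by
    simp [hτ, Equiv.Perm.mul_apply, Equiv.swap_apply_left, Equiv.swap_apply_self]
  have h0 : ∑ π : Equiv.Perm (Fin (N+2)), g (π 0) (π 1)
      = ∑ π : Equiv.Perm (Fin (N+2)), g (π j) (π k) := by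
    rw [← Equiv.sum_comp (Equiv.mulRight τ) (fun π => g (π 0) (π 1))]
    simp [Equiv.Perm.mul_apply, hτ0, hτ1]
  rw [← h0, ← Equiv.sum_comp Equiv.Perm.decomposeFin.symm (fun π => g (π 0) (π 1))]
  rw [Fintype.sum_prod_type]
  have key : ∀ a : Fin (N+2), ∑ σ : Equiv.Perm (Fin (N+1)),
      g ((Equiv.Perm.decomposeFin.symm (a, σ)) 0) ((Equiv.Perm.decomposeFin.symm (a, σ)) 1)
      = (N.factorial : ℝ) * ((∑ b, g a b) - g a a) := by
    intro a
    have h1 : ∀ σ : Equiv.Perm (Fin (N+1)),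
        g ((Equiv.Perm.decomposeFin.symm (a, σ)) 0) ((Equiv.Perm.decomposeFin.symm (a, σ)) 1)
        = g a (Equiv.swap 0 a (σ 0).succ) := by
      intro σ
      rw [Equiv.Perm.decomposeFin_symm_apply_zero, ← Fin.succ_zero_eq_one,
        Equiv.Perm.decomposeFin_symm_apply_succ]
    simp_rw [h1]
    rw [sumA (fun b => g a (Equiv.swap 0 a b.succ)) 0]
    congr 1
    have h2 : ∑ x : Fin (N+2), g a (Equiv.swap 0 a x)
        = g a (Equiv.swap 0 a 0) + ∑ b : Fin (N+1), g a (Equiv.swap 0 a b.succ) :=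
      Fin.sum_univ_succ _
    have h3 : ∑ x : Fin (N+2), g a (Equiv.swap 0 a x) = ∑ b, g a b :=
      Equiv.sum_comp (Equiv.swap 0 a) (fun b => g a b)
    rw [Equiv.swap_apply_left] at h2
    rw [h3] at h2
    linarith [h2]
  simp_rw [key]
  rw [← Finset.mul_sum]
/-- Sampling-without-replacement variance (Lemma 1 of Mishchenko et al. 2020): for a uniformly
random permutation `π` of `{1,…,n}` and `1 ≤ i ≤ n−1`, the average `X̄_π` of the first `i`
entries satisfies `E[‖X̄_π‖²] = ‖X̄‖² + (n−i)/(i(n−1))·σ²` where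
`σ² = (1/n)Σⱼ‖Xⱼ − X̄‖²`. -/
theorem stmt_11 {d n : ℕ} (X : Fin n → EuclideanSpace ℝ (Fin d))
    (Xbar : EuclideanSpace ℝ (Fin d)) (hXbar : Xbar = (1 / (n : ℝ)) • ∑ j : Fin n, X j)
    (σ2 : ℝ) (hσ2 : σ2 = (1 / (n : ℝ)) * ∑ j : Fin n, ‖X j - Xbar‖ ^ 2)
    (i : ℕ) (hi1 : 1 ≤ i) (hi2 : i ≤ n - 1) (hn : 2 ≤ n) :
    (1 / (n.factorial : ℝ)) * ∑ π : Equiv.Perm (Fin n),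
        ‖(1 / (i : ℝ)) • ∑ j ∈ Finset.univ.filter (fun j : Fin n => (j : ℕ) < i), X (π j)‖ ^ 2
      = ‖Xbar‖ ^ 2 + (((n : ℝ) - i) / ((i : ℝ) * ((n : ℝ) - 1))) * σ2 := by
  obtain ⟨m, rfl⟩ : ∃ m, n = m + 2 := ⟨n - 2, by omega⟩
  set S : ℝ := ∑ a : Fin (m+2), ‖X a‖ ^ 2 with hSdef
  set B : ℝ := ‖Xbar‖ ^ 2 with hBdef
  set T : ℝ := ∑ a : Fin (m+2), ∑ b : Fin (m+2), (inner ℝ (X a) (X b) : ℝ) with hTdef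
  have hNne : ((m+2 : ℕ) : ℝ) ≠ 0 := by positivity
  have hsum : ∑ j : Fin (m+2), X j = ((m+2 : ℕ) : ℝ) • Xbar := by
    rw [hXbar, smul_smul, mul_one_div, div_self hNne, one_smul]
  have hT : T = ((m+2 : ℕ) : ℝ)^2 * B := by
    have h1 : T = (inner ℝ (∑ j : Fin (m+2), X j) (∑ j : Fin (m+2), X j) : ℝ) := by
      rw [sum_inner]
      exact (Finset.sum_congr rfl fun a _ => by rw [inner_sum]).symm
    rw [h1, hsum, real_inner_smul_left, real_inner_smul_right, real_inner_self_eq_norm_sq]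
    ring
  have hS : S = ((m+2 : ℕ) : ℝ) * σ2 + ((m+2 : ℕ) : ℝ) * B := by
    have hinner : (inner ℝ (∑ j : Fin (m+2), X j) Xbar : ℝ) = ((m+2:ℕ) : ℝ) * B := by
      rw [hsum, real_inner_smul_left, real_inner_self_eq_norm_sq]
    have hexp : ∑ j : Fin (m+2), ‖X j - Xbar‖ ^ 2 = S - ((m+2:ℕ) : ℝ) * B := by
      have h4 : ∀ j : Fin (m+2), ‖X j - Xbar‖ ^ 2
          = ‖X j‖^2 - 2 * (inner ℝ (X j) Xbar : ℝ) + ‖Xbar‖^2 := fun j => norm_sub_sq_real _ _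
      rw [Finset.sum_congr rfl fun j _ => h4 j, Finset.sum_add_distrib,
        Finset.sum_sub_distrib, ← Finset.mul_sum, ← sum_inner, hinner, Finset.sum_const]
      simp only [← hSdef, ← hBdef, Finset.card_univ, Fintype.card_fin, nsmul_eq_mul]
      ring
    rw [hσ2, hexp]
    field_simp
    ring
  set P := Finset.univ.filter (fun j : Fin (m+2) => (j : ℕ) < i) with hPdef
  have hcard : P.card = i := by
    have h2 : P.card = ((Finset.range (m+2)).filter (fun j => j < i)).card := by
      rw [hPdef, Finset.card_filter, Finset.card_filter, ← Fin.sum_univ_eq_sum_range]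
    have h3 : (Finset.range (m+2)).filter (fun j => j < i) = Finset.range i := by
      ext x; simp; omega
    rw [h2, h3, Finset.card_range]
  have hine : (i : ℝ) ≠ 0 := by positivity
  have expand : ∀ π : Equiv.Perm (Fin (m+2)), ‖(1 / (i : ℝ)) • ∑ j ∈ P, X (π j)‖ ^ 2
      = (1 / (i : ℝ))^2 * ∑ j ∈ P, ∑ k ∈ P, (inner ℝ (X (π j)) (X (π k)) : ℝ) := by
    intro π
    rw [norm_smul, mul_pow]
    congr 1
    · rw [Real.norm_eq_abs, sq_abs]
    · rw [← real_inner_self_eq_norm_sq, sum_inner]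
      exact Finset.sum_congr rfl fun j _ => by rw [inner_sum]
  set A : ℝ := ((m+1).factorial : ℝ) * S with hAdef
  set C : ℝ := (m.factorial : ℝ) * (T - S) with hCdef
  have inner_eval : ∀ j k : Fin (m+2), ∑ π : Equiv.Perm (Fin (m+2)),
      (inner ℝ (X (π j)) (X (π k)) : ℝ) = if j = k then A else C := by
    intro j k
    by_cases h : j = k
    · subst h
      rw [if_pos rfl, hAdef, sumA (N := m+1) (fun a => (inner ℝ (X a) (X a) : ℝ)) j]
      congr 1
      exact Finset.sum_congr rfl fun a _ => real_inner_self_eq_norm_sq _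
    · rw [if_neg h, hCdef, sumB (N := m) (fun a b => (inner ℝ (X a) (X b) : ℝ)) j k h]
      congr 1
      rw [Finset.sum_sub_distrib, hTdef, hSdef]
      congr 1
      exact Finset.sum_congr rfl fun a _ => real_inner_self_eq_norm_sq _
  have swap_sum : ∑ π : Equiv.Perm (Fin (m+2)), ∑ j ∈ P, ∑ k ∈ P,
        (inner ℝ (X (π j)) (X (π k)) : ℝ)
      = ∑ j ∈ P, ∑ k ∈ P, ∑ π : Equiv.Perm (Fin (m+2)), (inner ℝ (X (π j)) (X (π k)) : ℝ) := by
    rw [Finset.sum_comm]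
    exact Finset.sum_congr rfl fun j _ => Finset.sum_comm
  have pair_sum : ∑ j ∈ P, ∑ k ∈ P, (if j = k then A else C)
      = (i : ℝ) * (A + ((i : ℝ) - 1) * C) := by
    have hrow : ∀ j ∈ P, ∑ k ∈ P, (if j = k then A else C) = A + ((i : ℝ) - 1) * C := by
      intro j hj
      have h5 : ∑ k ∈ P, (if j = k then A else C)
          = ∑ k ∈ P, (C + if j = k then A - C else 0) :=
        Finset.sum_congr rfl fun k _ => by by_cases h : j = k <;> simp [h]
      rw [h5, Finset.sum_add_distrib, Finset.sum_const, Finset.sum_ite_eq, if_pos hj, hcard,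
        nsmul_eq_mul]
      ring
    rw [Finset.sum_congr rfl hrow, Finset.sum_const, hcard, nsmul_eq_mul]
  rw [Finset.sum_congr rfl fun π _ => expand π, ← Finset.mul_sum, swap_sum]
  rw [Finset.sum_congr rfl fun j _ => Finset.sum_congr rfl fun k _ => inner_eval j k]
  rw [pair_sum]
  have hfac2 : (((m+2).factorial : ℕ) : ℝ)
      = ((m : ℝ) + 2) * ((m : ℝ) + 1) * (m.factorial : ℝ) := by
    push_cast [Nat.factorial_succ]
    ring
  have hfac1 : (((m+1).factorial : ℕ) : ℝ) = ((m : ℝ) + 1) * (m.factorial : ℝ) := by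
    push_cast [Nat.factorial_succ]
    ring
  have hmfne : (m.factorial : ℝ) ≠ 0 := by positivity
  have hm1ne : (m : ℝ) + 1 ≠ 0 := by positivity
  rw [hAdef, hCdef, hT, hS, hfac2, hfac1]
  have hm2ne : (m : ℝ) + 2 ≠ 0 := by positivity
  push_cast
  have hn1 : ((m:ℝ) + 2) - 1 = (m:ℝ) + 1 := by ring
  rw [hn1]
  field_simp [hine, hm1ne, hm2ne, hmfne]
  ring
end

section
/- Let f_1,…,f_n : ℝ^d → ℝ be L-smooth with L ≤ L_max, let f = (1/n)Σ f_i, let x_* ∈ ℝ^d, γ > 0, and let π be a uniformly random permutation of {1,…,n}. Define x_*^i = x_* − γ Σ_{j=0}^{i−1} ∇f_{π_j}(x_*) for i = 1,…,n−1, the shuffling radius σ²_rad = max_{1≤i≤n−1} (1/γ²) E_π[D_{f_{π_i}}(x_*^i, x_*)], and σ_*² = (1/n) Σ_i ‖∇f_i(x_*) − ∇f(x_*)‖². Then σ²_rad ≤ (L_max/2) · n · (n‖∇f(x_*)‖² + σ_*²/2). -/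
open scoped RealInnerProductSpace BigOperators
open Finset Equiv

private lemma perm_sum_one {n : ℕ} (j : Fin (n+1)) (g : Fin (n+1) → ℝ) :
    ∑ π : Equiv.Perm (Fin (n+1)), g (π j) = (n.factorial : ℝ) * ∑ a, g a := by
  have h0 : ∑ π : Equiv.Perm (Fin (n+1)), g (π j)
      = ∑ π : Equiv.Perm (Fin (n+1)), g (π 0) := by
    rw [← Equiv.sum_comp (Equiv.mulRight (Equiv.swap 0 j))
      (fun π : Equiv.Perm (Fin (n+1)) => g (π 0))]
    refine Finset.sum_congr rfl fun π _ => ?_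
    simp [Equiv.Perm.mul_apply]
  rw [h0, ← Equiv.sum_comp (Equiv.Perm.decomposeFin.symm)
    (fun π : Equiv.Perm (Fin (n+1)) => g (π 0))]
  rw [Fintype.sum_prod_type]
  simp [Equiv.Perm.decomposeFin_symm_apply_zero, Finset.sum_const, Fintype.card_perm,
    mul_comm, Finset.mul_sum]

private lemma perm_sum_two {n : ℕ} (j k : Fin (n+2)) (hjk : j ≠ k)
    (g : Fin (n+2) → Fin (n+2) → ℝ) :
    ∑ π : Equiv.Perm (Fin (n+2)), g (π j) (π k)
      = (n.factorial : ℝ) * ∑ a, ∑ b ∈ Finset.univ.erase a, g a b := by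
  -- reduce to j = 0, k = 1
  have hk' : Equiv.swap (0 : Fin (n+2)) j k ≠ 0 := by
    intro h
    have hkj : k = j := by simpa using congrArg (Equiv.swap (0 : Fin (n+2)) j) h
    exact hjk hkj.symm
  set τ : Equiv.Perm (Fin (n+2)) :=
    (Equiv.swap (0 : Fin (n+2)) j) * (Equiv.swap (1 : Fin (n+2)) (Equiv.swap 0 j k)) with hτ
  have hτ0 : τ 0 = j := by
    simp only [hτ, Equiv.Perm.mul_apply]
    rw [Equiv.swap_apply_of_ne_of_ne (by norm_num) (Ne.symm hk')]
    exact Equiv.swap_apply_left 0 j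
  have hτ1 : τ 1 = k := by
    simp only [hτ, Equiv.Perm.mul_apply]
    rw [Equiv.swap_apply_left]
    exact Equiv.swap_apply_self 0 j k ▸ (Equiv.swap_apply_self 0 j k)
  have h01 : ∑ π : Equiv.Perm (Fin (n+2)), g (π j) (π k)
      = ∑ π : Equiv.Perm (Fin (n+2)), g (π 0) (π 1) := by
    rw [← Equiv.sum_comp (Equiv.mulRight τ)
      (fun π : Equiv.Perm (Fin (n+2)) => g (π 0) (π 1))]
    refine Finset.sum_congr rfl fun π _ => ?_
    simp [Equiv.Perm.mul_apply, hτ0, hτ1]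
  rw [h01, ← Equiv.sum_comp (Equiv.Perm.decomposeFin.symm)
    (fun π : Equiv.Perm (Fin (n+2)) => g (π 0) (π 1))]
  rw [Fintype.sum_prod_type]
  have step : ∀ a : Fin (n+2),
      (∑ e : Equiv.Perm (Fin (n+1)),
        g (Equiv.Perm.decomposeFin.symm (a, e) 0) (Equiv.Perm.decomposeFin.symm (a, e) 1))
      = (n.factorial : ℝ) * ∑ b ∈ Finset.univ.erase a, g a b := by
    intro a
    have : ∀ e : Equiv.Perm (Fin (n+1)),
        g (Equiv.Perm.decomposeFin.symm (a, e) 0) (Equiv.Perm.decomposeFin.symm (a, e) 1)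
        = (fun b : Fin (n+1) => g a (Equiv.swap 0 a b.succ)) (e 0) := by
      intro e
      rw [Equiv.Perm.decomposeFin_symm_apply_zero, Equiv.Perm.decomposeFin_symm_apply_one]
    have h2 : (∑ e : Equiv.Perm (Fin (n+1)),
        (fun b : Fin (n+1) => g a (Equiv.swap 0 a b.succ)) (e 0))
        = (n.factorial : ℝ) * ∑ b : Fin (n+1),
            (fun b : Fin (n+1) => g a (Equiv.swap 0 a b.succ)) b :=
      perm_sum_one (0 : Fin (n+1)) (fun b : Fin (n+1) => g a (Equiv.swap 0 a b.succ))
    rw [Finset.sum_congr rfl (fun e _ => this e), h2]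
    congr 1
    -- ∑ b : Fin (n+1), g a (swap 0 a b.succ) = ∑ b ∈ univ.erase a, g a b
    refine Finset.sum_bij (fun b _ => Equiv.swap (0 : Fin (n+2)) a b.succ) ?_ ?_ ?_ ?_
    · intro b _
      refine Finset.mem_erase.2 ⟨?_, Finset.mem_univ _⟩
      intro h
      have hb : b.succ = (0 : Fin (n+2)) := by
        simpa using congrArg (Equiv.swap (0 : Fin (n+2)) a) h
      exact (Fin.succ_ne_zero b) hb
    · intro b₁ _ b₂ _ h
      exact Fin.succ_injective _ ((Equiv.swap (0 : Fin (n+2)) a).injective h)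
    · intro c hc
      have hca : c ≠ a := (Finset.mem_erase.1 hc).1
      have hy : Equiv.swap (0 : Fin (n+2)) a c ≠ 0 := by
        intro h
        have : c = a := by simpa using congrArg (Equiv.swap (0 : Fin (n+2)) a) h
        exact hca this
      refine ⟨(Equiv.swap (0 : Fin (n+2)) a c).pred hy, Finset.mem_univ _, ?_⟩
      show Equiv.swap (0 : Fin (n+2)) a ((Equiv.swap (0 : Fin (n+2)) a c).pred hy).succ = c
      rw [Fin.succ_pred]
      exact Equiv.swap_apply_self 0 a c
    · intro b _; rfl
  rw [Finset.sum_congr rfl (fun a _ => step a), ← Finset.mul_sum]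

private lemma card_filter_lt' {n i : ℕ} (hi : i < n) :
    (Finset.univ.filter (fun j : Fin n => (j : ℕ) < i)).card = i := by
  have h : Finset.univ.filter (fun j : Fin n => (j : ℕ) < i)
      = Finset.Iio (⟨i, hi⟩ : Fin n) := by
    ext j; simp [Fin.lt_def]
  rw [h, Fin.card_Iio]

private lemma scalar_ineq (ii nn σ G : ℝ) (hnn : 2 ≤ nn) (h1 : 1 ≤ ii) (h2 : ii ≤ nn - 1)
    (hσ : 0 ≤ σ) (hG : 0 ≤ G) :
    ii*(nn-1)*(nn*σ+nn*G) + ii*(ii-1)*(nn^2*G - nn*σ - nn*G)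
      ≤ nn^2*(nn-1)*(nn*G + σ/2) := by
  have t1 : 0 ≤ G * (nn - 1) * (nn^2 - ii^2) := by
    apply mul_nonneg (mul_nonneg hG (by linarith))
    nlinarith
  have t2 : 0 ≤ σ * (nn*(nn-1)/2 - ii*(nn-ii)) := by
    apply mul_nonneg hσ
    nlinarith [sq_nonneg (nn - 2*ii)]
  nlinarith [mul_nonneg (by linarith : (0:ℝ) ≤ nn) (add_nonneg t1 t2)]

private lemma perm_sum_norm {d m : ℕ} (X : Fin (m+2) → EuclideanSpace ℝ (Fin d))
    (i : ℕ) (h1 : 1 ≤ i) (hi : i < m+2) :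
    ∑ π : Equiv.Perm (Fin (m+2)),
        ‖∑ j ∈ Finset.univ.filter (fun j : Fin (m+2) => (j : ℕ) < i), X (π j)‖^2
      = (i : ℝ) * ((m+1).factorial : ℝ) * (∑ a, ⟪X a, X a⟫)
        + (i : ℝ) * ((i : ℝ) - 1) * (m.factorial : ℝ)
            * (∑ a, ∑ b ∈ Finset.univ.erase a, ⟪X a, X b⟫) := by
  set S := Finset.univ.filter (fun j : Fin (m+2) => (j : ℕ) < i) with hS
  have hcard : S.card = i := card_filter_lt' hi
  have expand : ∀ π : Equiv.Perm (Fin (m+2)),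
      ‖∑ j ∈ S, X (π j)‖^2 = ∑ j ∈ S, ∑ k ∈ S, ⟪X (π j), X (π k)⟫ := by
    intro π
    rw [← real_inner_self_eq_norm_sq, sum_inner]
    exact Finset.sum_congr rfl fun j _ => inner_sum _ _ _
  rw [Finset.sum_congr rfl fun π _ => expand π, Finset.sum_comm]
  have inner_j : ∀ j ∈ S,
      (∑ π : Equiv.Perm (Fin (m+2)), ∑ k ∈ S, ⟪X (π j), X (π k)⟫)
      = ((m+1).factorial : ℝ) * (∑ a, ⟪X a, X a⟫)
        + ((i : ℝ) - 1) * ((m.factorial : ℝ)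
            * (∑ a, ∑ b ∈ Finset.univ.erase a, ⟪X a, X b⟫)) := by
    intro j hj
    rw [Finset.sum_comm, ← Finset.add_sum_erase _ _ hj]
    have hdiag : (∑ π : Equiv.Perm (Fin (m+2)), ⟪X (π j), X (π j)⟫)
        = ((m+1).factorial : ℝ) * (∑ a, ⟪X a, X a⟫) :=
      perm_sum_one j (fun a => ⟪X a, X a⟫)
    have hoff : ∀ k ∈ S.erase j,
        (∑ π : Equiv.Perm (Fin (m+2)), ⟪X (π j), X (π k)⟫)
        = (m.factorial : ℝ) * (∑ a, ∑ b ∈ Finset.univ.erase a, ⟪X a, X b⟫) := by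
      intro k hk
      exact perm_sum_two j k (Ne.symm (Finset.mem_erase.1 hk).1)
        (fun a b => ⟪X a, X b⟫)
    rw [hdiag, Finset.sum_congr rfl hoff, Finset.sum_const,
      Finset.card_erase_of_mem hj, hcard]
    have : ((i - 1 : ℕ) : ℝ) = (i : ℝ) - 1 := by
      push_cast [Nat.cast_sub h1]; ring
    rw [nsmul_eq_mul, this]
  rw [Finset.sum_congr rfl inner_j, Finset.sum_const, hcard, nsmul_eq_mul]
  ring

set_option maxHeartbeats 4000000 in
/-- Theorem 1 (shuffling radius bound): for `L_max`-smooth `f_1,…,f_n`, any stepsize `γ > 0`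
and uniformly random permutation `π`, each quantity
`(1/γ²)·E_π[D_{f_{π_i}}(x_*^i, x_*)]` (for `1 ≤ i ≤ n−1`), hence the shuffling radius,
is at most `(L_max/2)·n·(n‖∇f(x_*)‖² + σ_*²/2)`. -/
theorem stmt_12 {d n : ℕ} (hn : 2 ≤ n) (Lmax γ : ℝ) (hγ : 0 < γ) (hL : 0 < Lmax)
    (f : Fin n → EuclideanSpace ℝ (Fin d) → ℝ)
    (hdiff : ∀ i, Differentiable ℝ (f i))
    (hsmooth : ∀ i x y, f i x - f i y - ⟪gradient (f i) y, x - y⟫ ≤ Lmax / 2 * ‖x - y‖ ^ 2)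
    (xstar gbar : EuclideanSpace ℝ (Fin d))
    (hgbar : gbar = (1 / (n : ℝ)) • ∑ i : Fin n, gradient (f i) xstar)
    (σstar2 : ℝ)
    (hσ : σstar2 = (1 / (n : ℝ)) * ∑ i : Fin n, ‖gradient (f i) xstar - gbar‖ ^ 2) :
    ∀ (i : ℕ) (hi : i < n), 1 ≤ i → i ≤ n - 1 →
      (1 / γ ^ 2) * ((1 / (n.factorial : ℝ)) * ∑ π : Equiv.Perm (Fin n),
        (f (π ⟨i, hi⟩)
            (xstar - γ • ∑ j ∈ Finset.univ.filter (fun j : Fin n => (j : ℕ) < i),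
              gradient (f (π j)) xstar)
          - f (π ⟨i, hi⟩) xstar
          - ⟪gradient (f (π ⟨i, hi⟩)) xstar,
              (xstar - γ • ∑ j ∈ Finset.univ.filter (fun j : Fin n => (j : ℕ) < i),
                gradient (f (π j)) xstar) - xstar⟫))
      ≤ (Lmax / 2) * n * ((n : ℝ) * ‖gbar‖ ^ 2 + σstar2 / 2) := by
  obtain ⟨m, rfl⟩ : ∃ m, n = m + 2 := ⟨n - 2, by omega⟩
  intro i hi h1 h2
  set X : Fin (m+2) → EuclideanSpace ℝ (Fin d) := fun a => gradient (f a) xstar with hX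
  have hXa : ∀ a, gradient (f a) xstar = X a := fun a => by rw [hX]
  simp only [hXa] at hσ hgbar ⊢
  set nn : ℝ := ((m + 2 : ℕ) : ℝ) with hnn
  have hnn0 : (0:ℝ) < nn := by rw [hnn]; positivity
  have hnn2 : (2:ℝ) ≤ nn := by rw [hnn]; push_cast; linarith
  set G : ℝ := ‖gbar‖^2 with hG
  have hG0 : (0:ℝ) ≤ G := by rw [hG]; positivity
  set S : Finset (Fin (m+2)) :=
    Finset.univ.filter (fun j : Fin (m+2) => (j : ℕ) < i) with hS
  -- sum of gradients
  have hsum : ∑ a, X a = nn • gbar := by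
    rw [hgbar, smul_smul, mul_one_div, div_self hnn0.ne', one_smul]
  -- inner sum with gbar
  have hinner : ∑ a, ⟪X a, gbar⟫ = nn * G := by
    rw [← sum_inner, hsum, real_inner_smul_left, real_inner_self_eq_norm_sq, hG]
  -- A identity
  have hA : ∑ a, ⟪X a, X a⟫ = nn * σstar2 + nn * G := by
    have hterm : ∀ a : Fin (m+2), ‖X a - gbar‖^2 = ⟪X a, X a⟫ - 2 * ⟪X a, gbar⟫ + G := by
      intro a
      rw [hG, real_inner_self_eq_norm_sq]
      exact norm_sub_sq_real _ _
    have hσ' : nn * σstar2 = ∑ a, ‖X a - gbar‖^2 := by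
      rw [hσ, ← mul_assoc, mul_one_div, div_self hnn0.ne', one_mul]
    have hmain : nn * σstar2 = (∑ a, ⟪X a, X a⟫) - 2 * (nn * G) + nn * G := by
      rw [hσ', Finset.sum_congr rfl (fun a _ => hterm a), Finset.sum_add_distrib,
        Finset.sum_sub_distrib, ← Finset.mul_sum, hinner, Finset.sum_const,
        Finset.card_univ, Fintype.card_fin, nsmul_eq_mul, ← hnn]
    linarith
  -- C identity
  have hC : ∑ a, ∑ b ∈ Finset.univ.erase a, ⟪X a, X b⟫
      = nn^2 * G - (nn * σstar2 + nn * G) := by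
    have hfull : ∑ a, ∑ b, ⟪X a, X b⟫ = nn^2 * G := by
      have h' : ∑ a, ∑ b, ⟪X a, X b⟫ = ⟪∑ a, X a, ∑ b, X b⟫ := by
        rw [sum_inner]
        exact Finset.sum_congr rfl fun a _ => (inner_sum _ _ _).symm
      rw [h', hsum, real_inner_smul_left, real_inner_smul_right,
        real_inner_self_eq_norm_sq, ← hG]
      ring
    have hsplit : ∀ a : Fin (m+2),
        (∑ b, ⟪X a, X b⟫) = ⟪X a, X a⟫ + ∑ b ∈ Finset.univ.erase a, ⟪X a, X b⟫ :=
      fun a => (Finset.add_sum_erase _ _ (Finset.mem_univ a)).symm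
    rw [Finset.sum_congr rfl (fun a _ => hsplit a), Finset.sum_add_distrib, hA] at hfull
    linarith
  -- smoothness bound per permutation
  have hDle : ∀ π : Equiv.Perm (Fin (m+2)),
      (f (π ⟨i, hi⟩) (xstar - γ • ∑ j ∈ S, X (π j)) - f (π ⟨i, hi⟩) xstar
        - ⟪X (π ⟨i, hi⟩), (xstar - γ • ∑ j ∈ S, X (π j)) - xstar⟫)
      ≤ Lmax / 2 * (γ^2 * ‖∑ j ∈ S, X (π j)‖^2) := by
    intro π
    have h := hsmooth (π ⟨i, hi⟩) (xstar - γ • ∑ j ∈ S, X (π j)) xstar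
    have hnorm : ‖(xstar - γ • ∑ j ∈ S, X (π j)) - xstar‖^2
        = γ^2 * ‖∑ j ∈ S, X (π j)‖^2 := by
      rw [show (xstar - γ • ∑ j ∈ S, X (π j)) - xstar = -(γ • ∑ j ∈ S, X (π j)) by abel,
        norm_neg, norm_smul, Real.norm_eq_abs, abs_of_pos hγ, mul_pow]
    rw [hnorm] at h
    exact h
  -- key identity
  have hkey : ∑ π : Equiv.Perm (Fin (m+2)), ‖∑ j ∈ S, X (π j)‖^2
      = (i : ℝ) * ((m+1).factorial : ℝ) * (nn * σstar2 + nn * G)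
        + (i : ℝ) * ((i : ℝ) - 1) * (m.factorial : ℝ)
            * (nn^2 * G - (nn * σstar2 + nn * G)) := by
    rw [hS, perm_sum_norm X i h1 hi, hA, hC]
  -- σ nonneg
  have hσ0 : 0 ≤ σstar2 := by
    rw [hσ]
    have : (0:ℝ) ≤ ∑ a : Fin (m+2), ‖X a - gbar‖^2 :=
      Finset.sum_nonneg fun a _ => sq_nonneg _
    have h1nn : (0:ℝ) ≤ 1 / nn := by positivity
    exact mul_nonneg h1nn this
  have hii1 : (1:ℝ) ≤ (i:ℝ) := by exact_mod_cast h1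
  have hii2 : (i:ℝ) ≤ nn - 1 := by
    have hle : (i:ℝ) ≤ ((m+1 : ℕ) : ℝ) := Nat.cast_le.2 (by omega)
    rw [hnn]; push_cast at hle ⊢; linarith
  have hfacpos : (0:ℝ) < (((m+2).factorial : ℕ) : ℝ) := by positivity
  have hfac1 : (((m+1).factorial : ℕ) : ℝ) = (nn - 1) * ((m.factorial : ℕ) : ℝ) := by
    rw [Nat.factorial_succ, hnn]; push_cast; ring
  have hfac2 : (((m+2).factorial : ℕ) : ℝ) = nn * ((nn - 1) * ((m.factorial : ℕ) : ℝ)) := by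
    rw [Nat.factorial_succ, ← hfac1, hnn]; push_cast; ring
  have hfacm : (0:ℝ) ≤ ((m.factorial : ℕ) : ℝ) := by positivity
  have hbound : ∑ π : Equiv.Perm (Fin (m+2)), ‖∑ j ∈ S, X (π j)‖^2
      ≤ (((m+2).factorial : ℕ) : ℝ) * (nn * (nn * G + σstar2 / 2)) := by
    rw [hkey, hfac2, hfac1]
    have hs := scalar_ineq (i:ℝ) nn σstar2 G hnn2 hii1 hii2 hσ0 hG0
    nlinarith [mul_le_mul_of_nonneg_left hs hfacm]
  have hsumD : (∑ π : Equiv.Perm (Fin (m+2)),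
      (f (π ⟨i, hi⟩) (xstar - γ • ∑ j ∈ S, X (π j)) - f (π ⟨i, hi⟩) xstar
        - ⟪X (π ⟨i, hi⟩), (xstar - γ • ∑ j ∈ S, X (π j)) - xstar⟫))
      ≤ Lmax / 2 * γ^2 * ∑ π : Equiv.Perm (Fin (m+2)), ‖∑ j ∈ S, X (π j)‖^2 := by
    rw [mul_assoc, Finset.mul_sum, Finset.mul_sum]
    exact Finset.sum_le_sum fun π _ => hDle π
  calc (1 / γ ^ 2) * ((1 / (((m+2).factorial : ℕ) : ℝ)) * ∑ π : Equiv.Perm (Fin (m+2)),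
        (f (π ⟨i, hi⟩) (xstar - γ • ∑ j ∈ S, X (π j)) - f (π ⟨i, hi⟩) xstar
          - ⟪X (π ⟨i, hi⟩), (xstar - γ • ∑ j ∈ S, X (π j)) - xstar⟫))
      ≤ (1 / γ ^ 2) * ((1 / (((m+2).factorial : ℕ) : ℝ))
          * (Lmax / 2 * γ^2 * ∑ π : Equiv.Perm (Fin (m+2)), ‖∑ j ∈ S, X (π j)‖^2)) := by
        exact mul_le_mul_of_nonneg_left
          (mul_le_mul_of_nonneg_left hsumD (by positivity)) (by positivity)
    _ = (Lmax / 2) * ((1 / (((m+2).factorial : ℕ) : ℝ))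
          * ∑ π : Equiv.Perm (Fin (m+2)), ‖∑ j ∈ S, X (π j)‖^2) := by
        field_simp
    _ ≤ (Lmax / 2) * ((1 / (((m+2).factorial : ℕ) : ℝ))
          * ((((m+2).factorial : ℕ) : ℝ) * (nn * (nn * G + σstar2 / 2)))) := by
        apply mul_le_mul_of_nonneg_left
          (mul_le_mul_of_nonneg_left hbound (by positivity)) (by positivity)
    _ = (Lmax / 2) * nn * (nn * G + σstar2 / 2) := by
        rw [one_div, inv_mul_cancel_left₀ hfacpos.ne']
        ring
end
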